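/- Let B₁ : ℝ → ℝ be N-Lipschitz and B₂ differentiable with B₂' = B₁. Define for x ≠ y: b(x,y) := (B₂(x) − B₂(y) − ½(B₁(x) + B₁(y))(x − y))/(x − y)². Then for x, x', y ∈ ℝ with |x − x'| ≤ |x − y|/2 and x' ≠ y, one has |b(x,y) − b(x',y)| ≤ C·N·|x − x'|/|x − y| for an absolute constant C. -/
import Mathlib

lemma taylor_aux (N : ℝ) (B₁ B₂ : ℝ → ℝ)
    (hL : ∀ x y : ℝ, |B₁ x - B₁ y| ≤ N * |x - y|)
    (hD : ∀ x : ℝ, HasDerivAt B₂ (B₁ x) x) (a b : ℝ) :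
    |B₂ a - B₂ b - B₁ b * (a - b)| ≤ N * (a - b) ^ 2 := by
  have hN : 0 ≤ N := by
    have h := hL 1 0
    have h2 := abs_nonneg (B₁ 1 - B₁ 0)
    simp at h
    linarith
  set g : ℝ → ℝ := fun t => B₂ t - B₁ b * t with hg
  have key : ∀ t ∈ segment ℝ b a, HasDerivWithinAt g (B₁ t - B₁ b) (segment ℝ b a) t := by
    intro t _
    exact (((hD t).sub ((hasDerivAt_id t).const_mul (B₁ b))).congr_deriv (by ring)).hasDerivWithinAt
  have bound : ∀ t ∈ segment ℝ b a, ‖B₁ t - B₁ b‖ ≤ N * |a - b| := by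
    rintro t ⟨u, v, hu, hv, huv, rfl⟩
    have h1 : |B₁ (u • b + v • a) - B₁ b| ≤ N * |u • b + v • a - b| := hL _ _
    have h2 : u • b + v • a - b = v * (a - b) := by
      have huv' : u = 1 - v := by linarith
      simp only [smul_eq_mul, huv']
      ring
    rw [h2] at h1
    rw [abs_mul, abs_of_nonneg hv] at h1
    refine h1.trans ?_
    have : v * |a - b| ≤ 1 * |a - b| := by
      apply mul_le_mul_of_nonneg_right (by linarith) (abs_nonneg _)
    nlinarith [abs_nonneg (a - b)]
  have seg : Convex ℝ (segment ℝ b a) := convex_segment b a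
  have hmem_b : b ∈ segment ℝ b a := left_mem_segment ℝ b a
  have hmem_a : a ∈ segment ℝ b a := right_mem_segment ℝ b a
  have := seg.norm_image_sub_le_of_norm_hasDerivWithin_le key bound hmem_b hmem_a
  have heq : g a - g b = B₂ a - B₂ b - B₁ b * (a - b) := by simp [hg]; ring
  rw [heq] at this
  calc |B₂ a - B₂ b - B₁ b * (a - b)| ≤ N * |a - b| * ‖a - b‖ := this
    _ = N * (a - b) ^ 2 := by rw [Real.norm_eq_abs]; rw [← sq_abs]; ring

theorem stmt7 :
    ∃ C : ℝ, 0 < C ∧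
      ∀ (N : ℝ) (B₁ B₂ : ℝ → ℝ),
        (∀ x y : ℝ, |B₁ x - B₁ y| ≤ N * |x - y|) →
        (∀ x : ℝ, HasDerivAt B₂ (B₁ x) x) →
        ∀ x x' y : ℝ, x ≠ y → x' ≠ y → |x - x'| ≤ |x - y| / 2 →
          |(B₂ x - B₂ y - (B₁ x + B₁ y) / 2 * (x - y)) / (x - y) ^ 2 -
            (B₂ x' - B₂ y - (B₁ x' + B₁ y) / 2 * (x' - y)) / (x' - y) ^ 2| ≤
              C * N * |x - x'| / |x - y| := by
  refine ⟨10, by norm_num, ?_⟩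
  intro N B₁ B₂ hL hD x x' y hxy hx'y hclose
  have hN : 0 ≤ N := by
    have h := hL 1 0
    have h2 := abs_nonneg (B₁ 1 - B₁ 0)
    simp at h
    linarith
  have hd : x - y ≠ 0 := sub_ne_zero.mpr hxy
  have hd' : x' - y ≠ 0 := sub_ne_zero.mpr hx'y
  have hp : (0:ℝ) < |x - y| := abs_pos.mpr hd
  have hq : (0:ℝ) < |x' - y| := abs_pos.mpr hd'
  have hr : (0:ℝ) ≤ |x - x'| := abs_nonneg _
  -- comparability of |x'-y| and |x-y|
  have hqlo : |x - y| / 2 ≤ |x' - y| := by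
    have h1 : |x - y| ≤ |x - x'| + |x' - y| := by
      calc |x - y| = |(x - x') + (x' - y)| := by ring_nf
        _ ≤ |x - x'| + |x' - y| := abs_add_le _ _
    linarith
  have hqhi : |x' - y| ≤ 3 * |x - y| / 2 := by
    have h1 : |x' - y| ≤ |x' - x| + |x - y| := by
      calc |x' - y| = |(x' - x) + (x - y)| := by ring_nf
        _ ≤ |x' - x| + |x - y| := abs_add_le _ _
    rw [abs_sub_comm x' x] at h1
    linarith
  set A := B₂ x - B₂ y - (B₁ x + B₁ y) / 2 * (x - y) with hA
  set A' := B₂ x' - B₂ y - (B₁ x' + B₁ y) / 2 * (x' - y) with hA'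
  rw [div_sub_div _ _ (pow_ne_zero 2 hd) (pow_ne_zero 2 hd'), abs_div,
    abs_of_nonneg (by positivity : (0:ℝ) ≤ (x - y) ^ 2 * (x' - y) ^ 2),
    div_le_div_iff₀ (by positivity) hp]
  -- key Taylor bounds
  have hT : |B₂ x - B₂ x' - B₁ x' * (x - x')| ≤ N * (x - x') ^ 2 :=
    taylor_aux N B₁ B₂ hL hD x x'
  have hT' : |B₂ x' - B₂ y - B₁ y * (x' - y)| ≤ N * (x' - y) ^ 2 :=
    taylor_aux N B₁ B₂ hL hD x' y
  have hv : |B₁ x' - B₁ x| ≤ N * |x - x'| := by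
    rw [abs_sub_comm] at *; exact (hL x x').trans (by rw [abs_sub_comm])
  have hw : |B₁ x' - B₁ y| ≤ N * |x' - y| := hL x' y
  -- bound |A - A'|
  have hu : |B₁ x' - (B₁ x + B₁ y) / 2| ≤ (N * |x - x'| + N * |x' - y|) / 2 := by
    have : B₁ x' - (B₁ x + B₁ y) / 2 = ((B₁ x' - B₁ x) + (B₁ x' - B₁ y)) / 2 := by ring
    rw [this, abs_div, abs_two]
    have := abs_add_le (B₁ x' - B₁ x) (B₁ x' - B₁ y)
    have h2 : |B₁ x' - B₁ x| + |B₁ x' - B₁ y| ≤ N * |x - x'| + N * |x' - y| := by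
      linarith
    linarith [abs_nonneg (B₁ x' - B₁ x + (B₁ x' - B₁ y))]
  have hAA' : |A - A'| ≤ N * |x - x'| ^ 2 + |x - x'| * ((N * |x - x'| + N * |x' - y|) / 2)
      + |x' - y| / 2 * (N * |x - x'|) := by
    have hid : A - A' = (B₂ x - B₂ x' - B₁ x' * (x - x'))
        + (x - x') * (B₁ x' - (B₁ x + B₁ y) / 2)
        + (x' - y) / 2 * (B₁ x' - B₁ x) := by
      rw [hA, hA']; ring
    calc |A - A'| ≤ |B₂ x - B₂ x' - B₁ x' * (x - x')|
          + |x - x'| * |B₁ x' - (B₁ x + B₁ y) / 2|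
          + |x' - y| / 2 * |B₁ x' - B₁ x| := by
          rw [hid]
          refine (abs_add_le _ _).trans ?_
          gcongr ?_ + ?_
          · refine (abs_add_le _ _).trans ?_
            gcongr ?_ + ?_
            · exact le_refl _
            · rw [abs_mul]
          · rw [abs_mul, abs_div, abs_two]
      _ ≤ _ := by
          rw [← sq_abs (x - x')] at hT
          gcongr
  have hA'bd : |A'| ≤ N * |x' - y| ^ 2 + |x' - y| / 2 * (N * |x' - y|) := by
    have hid : A' = (B₂ x' - B₂ y - B₁ y * (x' - y)) + (x' - y) / 2 * (B₁ y - B₁ x') := by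
      rw [hA']; ring
    have hw' : |B₁ y - B₁ x'| ≤ N * |x' - y| := by
      rw [abs_sub_comm]; exact hw
    calc |A'| ≤ |B₂ x' - B₂ y - B₁ y * (x' - y)| + |x' - y| / 2 * |B₁ y - B₁ x'| := by
          rw [hid]
          refine (abs_add_le _ _).trans ?_
          gcongr ?_ + ?_
          · exact le_refl _
          · rw [abs_mul, abs_div, abs_two]
      _ ≤ _ := by
          rw [← sq_abs (x' - y)] at hT'
          gcongr
  -- decompose numerator
  have hnum : |A * (x' - y) ^ 2 - (x - y) ^ 2 * A'|
      ≤ |A - A'| * |x' - y| ^ 2 + |A'| * ((|x - y| + |x' - y|) * |x - x'|) := by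
    have hid : A * (x' - y) ^ 2 - (x - y) ^ 2 * A'
        = (A - A') * (x' - y) ^ 2 + A' * (((x' - y) + (x - y)) * ((x' - y) - (x - y))) := by
      ring
    rw [hid]
    have e1 : |(A - A') * (x' - y) ^ 2| = |A - A'| * |x' - y| ^ 2 := by
      rw [abs_mul, abs_pow]
    have e2 : |A' * ((x' - y + (x - y)) * (x' - y - (x - y)))|
        ≤ |A'| * ((|x - y| + |x' - y|) * |x - x'|) := by
      rw [abs_mul, abs_mul]
      have h3 : |x' - y - (x - y)| = |x - x'| := by
        rw [show x' - y - (x - y) = -(x - x') by ring, abs_neg]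
      rw [h3]
      have h4 : |x' - y + (x - y)| ≤ |x - y| + |x' - y| := by
        refine (abs_add_le _ _).trans ?_; linarith
      have := mul_le_mul_of_nonneg_right h4 (abs_nonneg (x - x'))
      exact mul_le_mul_of_nonneg_left this (abs_nonneg A')
    exact (abs_add_le _ _).trans (by rw [e1]; linarith [e2])
  -- final numeric combination
  set p := |x - y|
  set q := |x' - y|
  set r := |x - x'|
  calc |A * (x' - y) ^ 2 - (x - y) ^ 2 * A'| * p
      ≤ (|A - A'| * q ^ 2 + |A'| * ((p + q) * r)) * p := by gcongr
    _ ≤ ((N * r ^ 2 + r * ((N * r + N * q) / 2) + q / 2 * (N * r)) * q ^ 2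
          + (N * q ^ 2 + q / 2 * (N * q)) * ((p + q) * r)) * p := by
        gcongr <;> first
          | positivity
          | exact hAA'
          | exact hA'bd
    _ = N * r * q ^ 2 * p * (3 / 2 * r + 5 / 2 * q + 3 / 2 * p) := by ring
    _ ≤ N * r * q ^ 2 * p * (10 * p) := by
        apply mul_le_mul_of_nonneg_left (by linarith) (by positivity)
    _ = 10 * N * r * ((x - y) ^ 2 * (x' - y) ^ 2) := by
        have h1 : p ^ 2 = (x - y) ^ 2 := sq_abs _
        have h2 : q ^ 2 = (x' - y) ^ 2 := sq_abs _
        rw [← h1, ← h2]; ring
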